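/- Let C be a cartesian monoidal category (tensor product given by binary products, tensor unit a terminal object ⊤). An object U of C is the domain of a central idempotent (i.e. the unique morphism u : U ⟶ ⊤ can be equipped with a half-braiding making it a central idempotent) if and only if U is subterminal, i.e. the unique morphism U ⟶ ⊤ is a monomorphism (equivalently, any two morphisms A ⟶ U are equal). -/

import Mathlib

open CategoryTheory MonoidalCategory Limits

/-- A central idempotent in a monoidal category. -/
structure IsCentralIdempotent {C : Type*} [Category C] [MonoidalCategory C]
    {U : C} (u : U ⟶ 𝟙_ C) (σ : HalfBraiding U) : Prop where
  central : (u ▷ U) ≫ (λ_ U).hom = (U ◁ u) ≫ (ρ_ U).hom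
  isIso : IsIso ((u ▷ U) ≫ (λ_ U).hom)
  compat : ∀ A : C, (σ.β A).hom ≫ (A ◁ u) ≫ (ρ_ A).hom = (u ▷ A) ≫ (λ_ A).hom

variable {C : Type*} [Category C] [HasTerminal C] [HasBinaryProducts C] in
theorem stmt5_whiskerRight {X Y Z : C} (f : X ⟶ Y) :
  letI : MonoidalCategory C :=
    (CartesianMonoidalCategory.ofChosenFiniteProducts (getLimitCone (Functor.empty C))
      (fun X Y => getLimitCone (pair X Y))).toMonoidalCategory
  f ▷ Z = prod.map f (𝟙 Z) := by
  apply prod.hom_ext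
  · refine Eq.trans ?_ (prod.map_fst _ _).symm
    exact (BinaryFan.IsLimit.lift' _ _ _).2.1
  · refine Eq.trans ?_ (prod.map_snd _ _).symm
    exact (BinaryFan.IsLimit.lift' _ _ _).2.2

variable {C : Type*} [Category C] [HasTerminal C] [HasBinaryProducts C] in
theorem stmt5_whiskerLeft {X Y Z : C} (f : X ⟶ Y) :
  letI : MonoidalCategory C :=
    (CartesianMonoidalCategory.ofChosenFiniteProducts (getLimitCone (Functor.empty C))
      (fun X Y => getLimitCone (pair X Y))).toMonoidalCategory
  Z ◁ f = prod.map (𝟙 Z) f := by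
  apply prod.hom_ext
  · refine Eq.trans ?_ (prod.map_fst _ _).symm
    exact (BinaryFan.IsLimit.lift' _ _ _).2.1
  · refine Eq.trans ?_ (prod.map_snd _ _).symm
    exact (BinaryFan.IsLimit.lift' _ _ _).2.2

variable {C : Type*} [Category C] [HasTerminal C] [HasBinaryProducts C] in
theorem stmt5_leftUnitor_hom {X : C} :
  letI : MonoidalCategory C :=
    (CartesianMonoidalCategory.ofChosenFiniteProducts (getLimitCone (Functor.empty C))
      (fun X Y => getLimitCone (pair X Y))).toMonoidalCategory
  (λ_ X).hom = prod.snd := rfl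

variable {C : Type*} [Category C] [HasTerminal C] [HasBinaryProducts C] in
theorem stmt5_rightUnitor_hom {X : C} :
  letI : MonoidalCategory C :=
    (CartesianMonoidalCategory.ofChosenFiniteProducts (getLimitCone (Functor.empty C))
      (fun X Y => getLimitCone (pair X Y))).toMonoidalCategory
  (ρ_ X).hom = prod.fst := rfl

variable {C : Type*} [Category C] [HasTerminal C] [HasBinaryProducts C] in
theorem stmt5_associator_hom {X Y Z : C} :
  letI : MonoidalCategory C :=
    (CartesianMonoidalCategory.ofChosenFiniteProducts (getLimitCone (Functor.empty C))
      (fun X Y => getLimitCone (pair X Y))).toMonoidalCategory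
  (α_ X Y Z).hom = (prod.associator X Y Z).hom := rfl

variable {C : Type*} [Category C] [HasTerminal C] [HasBinaryProducts C] in
theorem stmt5_associator_inv {X Y Z : C} :
  letI : MonoidalCategory C :=
    (CartesianMonoidalCategory.ofChosenFiniteProducts (getLimitCone (Functor.empty C))
      (fun X Y => getLimitCone (pair X Y))).toMonoidalCategory
  (α_ X Y Z).inv = (prod.associator X Y Z).inv := rfl

/-- In a cartesian monoidal category, an object `U` is the domain of a central idempotent
(i.e. the unique morphism `U ⟶ ⊤` can be equipped with a half-braiding making it a central
idempotent) if and only if `U` is subterminal, i.e. `U ⟶ ⊤` is a monomorphism. -/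
theorem stmt5 {C : Type*} [Category C] [HasTerminal C] [HasBinaryProducts C] (U : C) :
    letI : MonoidalCategory C :=
      (CartesianMonoidalCategory.ofChosenFiniteProducts (getLimitCone (Functor.empty C))
        (fun X Y => getLimitCone (pair X Y))).toMonoidalCategory
    ((∃ σ : HalfBraiding U, IsCentralIdempotent (terminal.from U) σ) ↔
      Mono (terminal.from U)) := by
  letI : MonoidalCategory C :=
    (CartesianMonoidalCategory.ofChosenFiniteProducts (getLimitCone (Functor.empty C))
      (fun X Y => getLimitCone (pair X Y))).toMonoidalCategory
  have key : (∀ {A : C} (f g : A ⟶ U), f = g) ↔ Mono (terminal.from U) := by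
    constructor
    · intro h
      exact ⟨fun f g _ => h f g⟩
    · intro h A f g
      apply (cancel_mono (terminal.from U)).mp
      apply terminal.hom_ext
  constructor
  · rintro ⟨σ, hσ⟩
    rw [← key]
    intro A f g
    have hc : (prod.snd : U ⨯ U ⟶ U) = prod.fst := by
      have := hσ.central
      erw [stmt5_whiskerRight, stmt5_whiskerLeft] at this
      replace this : prod.map (terminal.from U) (𝟙 U) ≫ prod.snd
          = prod.map (𝟙 U) (terminal.from U) ≫ prod.fst := this
      simp only [stmt5_whiskerRight,
        stmt5_whiskerLeft,
        stmt5_leftUnitor_hom,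
        stmt5_rightUnitor_hom,
        prod.map_snd, prod.map_fst] at this
      simpa using this
    have := congrArg (fun k => prod.lift f g ≫ k) hc
    simpa [prod.lift_fst, prod.lift_snd] using this.symm
  · intro h
    have huniq : ∀ {A : C} (f g : A ⟶ U), f = g := key.mpr h
    refine ⟨⟨fun A => prod.braiding U A, ?_, ?_⟩, ?_, ?_, ?_⟩
    · intro A B
      erw [stmt5_whiskerRight, stmt5_whiskerLeft]
      show (prod.braiding U (A ⨯ B)).hom = (prod.associator U A B).inv ≫
        prod.map (prod.braiding U A).hom (𝟙 B) ≫ (prod.associator A U B).hom ≫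
        prod.map (𝟙 A) (prod.braiding U B).hom ≫ (prod.associator A B U).inv
      apply Limits.prod.hom_ext
      · apply Limits.prod.hom_ext <;>
          simp [stmt5_associator_hom, stmt5_associator_inv, stmt5_whiskerRight, stmt5_whiskerLeft, prod.braiding, prod.lift_fst, prod.lift_snd, Limits.prod.associator, prod.lift_fst_assoc, prod.lift_snd_assoc]
      · exact huniq _ _
    · intro A B f
      erw [stmt5_whiskerRight, stmt5_whiskerLeft]
      show prod.map (𝟙 U) f ≫ (prod.braiding U B).hom = (prod.braiding U A).hom ≫ prod.map f (𝟙 U)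
      apply Limits.prod.hom_ext <;> simp [stmt5_whiskerRight, stmt5_whiskerLeft, prod.braiding, prod.lift_fst, prod.lift_snd]
    · erw [stmt5_whiskerRight, stmt5_whiskerLeft]
      show prod.map (terminal.from U) (𝟙 U) ≫ prod.snd
        = prod.map (𝟙 U) (terminal.from U) ≫ prod.fst
      simp [huniq (prod.snd : U ⨯ U ⟶ U) prod.fst]
    · erw [stmt5_whiskerRight]
      show IsIso (prod.map (terminal.from U) (𝟙 U) ≫ prod.snd)
      refine ⟨prod.lift (𝟙 U) (𝟙 U), ?_, by simp [prod.lift_snd]⟩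
      apply Limits.prod.hom_ext <;> simp [huniq (prod.snd : U ⨯ U ⟶ U) prod.fst, prod.lift_fst]
    · intro A
      erw [stmt5_whiskerRight, stmt5_whiskerLeft]
      show (prod.braiding U A).hom ≫ prod.map (𝟙 A) (terminal.from U) ≫ prod.fst
        = prod.map (terminal.from U) (𝟙 A) ≫ prod.snd
      simp [prod.braiding, prod.lift_fst, prod.lift_snd]
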